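/- Let F be a free filter on ℕ such that ξ(F) is Fréchet–Urysohn. For every nontrivial convergent sequence S in ξ(F) and every n ∈ ℕ, the set D_S^n = {T ∈ S_c(ξ(F)) : |T ∩ S| ≥ n} is open and dense in S_c(ξ(F)). -/
import Mathlib


open Set TopologicalSpace Filter

/-- The Vietoris topology on collections of subsets of `X`. -/
def vietoris (X : Type*) [TopologicalSpace X] : TopologicalSpace (Set X) :=
  TopologicalSpace.generateFrom
    ({t | ∃ U : Set X, IsOpen U ∧ t = {S : Set X | S ⊆ U}} ∪
     {t | ∃ U : Set X, IsOpen U ∧ t = {S : Set X | (S ∩ U).Nonempty}})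

/-- The set `S` converges to `x`: `x ∈ S` and `S \ U` is finite for every open
neighborhood `U` of `x`. -/
def ConvTo {X : Type*} [TopologicalSpace X] (S : Set X) (x : X) : Prop :=
  x ∈ S ∧ ∀ U : Set X, IsOpen U → x ∈ U → (S \ U).Finite

/-- `S` is a nontrivial convergent sequence in `X`: a countably infinite closed set with a
unique non-isolated point `x` (all other points are isolated in `S`), converging to `x`. -/
def IsNCS (X : Type*) [TopologicalSpace X] (S : Set X) : Prop :=
  S.Infinite ∧ S.Countable ∧ IsClosed S ∧ ∃ x : X, ConvTo S x ∧
    (∀ y ∈ S, y ≠ x → ∃ U : Set X, IsOpen U ∧ U ∩ S = {y}) ∧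
    ¬ ∃ U : Set X, IsOpen U ∧ U ∩ S = {x}

/-- The hyperspace of nontrivial convergent sequences of `X`. -/
def Sc (X : Type*) [TopologicalSpace X] : Type _ :=
  {S : Set X // IsNCS X S}

instance (X : Type*) [TopologicalSpace X] : TopologicalSpace (Sc X) :=
  TopologicalSpace.induced (fun S : Sc X => S.1) (vietoris X)


/-- The topology of the space `ξ(F) = ℕ ∪ {F}` (coded as `Option ℕ`, with `none` playing
the role of the point `F`): points of `ℕ` are isolated, and neighborhoods of `none`
are the sets `A ∪ {none}` with `A ∈ F`. -/
def xiTop (F : Filter ℕ) : TopologicalSpace (Option ℕ) where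
  IsOpen U := none ∈ U → {n : ℕ | some n ∈ U} ∈ F
  isOpen_univ := fun _ => Filter.univ_mem
  isOpen_inter := fun U V hU hV h => Filter.inter_mem (hU h.1) (hV h.2)
  isOpen_sUnion := fun s hs h => by
    obtain ⟨t, ht, hnt⟩ := h
    exact Filter.mem_of_superset (hs t ht hnt) (fun n hn => ⟨t, ht, hn⟩)

/-! ### Auxiliary lemmas -/

lemma xi_isOpen_iff (F : Filter ℕ) (U : Set (Option ℕ)) :
    @IsOpen _ (xiTop F) U ↔ (none ∈ U → {n : ℕ | some n ∈ U} ∈ F) := Iff.rfl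

lemma xi_isOpen_of_not_none (F : Filter ℕ) {U : Set (Option ℕ)} (h : none ∉ U) :
    @IsOpen _ (xiTop F) U := fun hn => absurd hn h

/-- In `ξ(F)`, a nontrivial convergent sequence contains `none` and is almost contained
in every open neighborhood of `none`. -/
lemma ncs_none (F : Filter ℕ) {S : Set (Option ℕ)} (h : @IsNCS _ (xiTop F) S) :
    none ∈ S ∧ ∀ U : Set (Option ℕ), @IsOpen _ (xiTop F) U → none ∈ U → (S \ U).Finite := by
  letI : TopologicalSpace (Option ℕ) := xiTop F
  obtain ⟨hinf, hcnt, hcl, x, hconv, hiso, hniso⟩ := h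
  match x with
  | none => exact ⟨hconv.1, fun U hU hnU => hconv.2 U hU hnU⟩
  | some m =>
    exfalso
    apply hniso
    refine ⟨{some m}, xi_isOpen_of_not_none F (by simp), ?_⟩
    have hm : some m ∈ S := hconv.1
    ext x
    simp only [Set.mem_inter_iff, Set.mem_singleton_iff]
    exact ⟨fun ⟨h1, _⟩ => h1, fun h1 => ⟨h1, h1 ▸ hm⟩⟩

/-- Characterization of nontrivial convergent sequences in `ξ(F)`. -/
lemma ncs_of (F : Filter ℕ) {S : Set (Option ℕ)} (hinf : S.Infinite) (h0 : none ∈ S)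
    (ht : ∀ U : Set (Option ℕ), @IsOpen _ (xiTop F) U → none ∈ U → (S \ U).Finite) :
    @IsNCS _ (xiTop F) S := by
  letI : TopologicalSpace (Option ℕ) := xiTop F
  refine ⟨hinf, S.to_countable, ⟨xi_isOpen_of_not_none F (by simp [h0])⟩, none,
    ⟨h0, ht⟩, ?_, ?_⟩
  · rintro y hy hne
    obtain ⟨m, rfl⟩ := Option.ne_none_iff_exists'.1 hne
    refine ⟨{some m}, xi_isOpen_of_not_none F (by simp), ?_⟩
    ext x
    simp only [Set.mem_inter_iff, Set.mem_singleton_iff]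
    exact ⟨fun ⟨h1, _⟩ => h1, fun h1 => ⟨h1, h1 ▸ hy⟩⟩
  · rintro ⟨U, hU, hUS⟩
    have h0U : none ∈ U := by
      have : none ∈ U ∩ S := hUS ▸ rfl
      exact this.1
    have hfin : (S \ U).Finite := ht U hU h0U
    apply hinf
    have : S ⊆ (S \ U) ∪ {none} := by
      intro x hx
      by_cases hxU : x ∈ U
      · right
        have : x ∈ U ∩ S := ⟨hxU, hx⟩
        rwa [hUS] at this
      · exact Or.inl ⟨hx, hxU⟩
    exact (hfin.union (Set.finite_singleton none)).subset this

/-- The hit sets are Vietoris-open. -/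
lemma vietoris_hit {X : Type*} [TopologicalSpace X] {U : Set X} (hU : IsOpen U) :
    @IsOpen _ (vietoris X) {R : Set X | (R ∩ U).Nonempty} :=
  TopologicalSpace.GenerateOpen.basic _ (Or.inr ⟨U, hU, rfl⟩)

/-- Key structural lemma: any Vietoris-open set `W` containing `T` contains all sets
squeezed between `T` and a suitable open `U ⊇ T`. -/
lemma vietoris_key {X : Type*} [TopologicalSpace X] {W : Set (Set X)}
    (hW : @IsOpen _ (vietoris X) W) :
    ∀ T ∈ W, ∃ U : Set X, IsOpen U ∧ T ⊆ U ∧ ∀ R : Set X, T ⊆ R → R ⊆ U → R ∈ W := by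
  induction hW with
  | basic g hg =>
    rcases hg with ⟨U, hU, rfl⟩ | ⟨U, hU, rfl⟩
    · exact fun T hT => ⟨U, hU, hT, fun R _ hRU => hRU⟩
    · exact fun T hT =>
        ⟨Set.univ, isOpen_univ, Set.subset_univ _,
          fun R hTR _ => hT.mono (Set.inter_subset_inter hTR le_rfl)⟩
  | univ => exact fun T _ => ⟨Set.univ, isOpen_univ, Set.subset_univ _, fun _ _ _ => trivial⟩
  | inter W1 W2 _ _ ih1 ih2 =>
    intro T hT
    obtain ⟨U1, hU1, hTU1, h1⟩ := ih1 T hT.1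
    obtain ⟨U2, hU2, hTU2, h2⟩ := ih2 T hT.2
    exact ⟨U1 ∩ U2, hU1.inter hU2, Set.subset_inter hTU1 hTU2,
      fun R hTR hRU => ⟨h1 R hTR (hRU.trans Set.inter_subset_left),
        h2 R hTR (hRU.trans Set.inter_subset_right)⟩⟩
  | sUnion s _ ih =>
    rintro T ⟨W', hW's, hTW'⟩
    obtain ⟨U, hU, hTU, h⟩ := ih W' hW's T hTW'
    exact ⟨U, hU, hTU, fun R hTR hRU => ⟨W', hW's, h R hTR hRU⟩⟩

/-- For a free filter `F` with `ξ(F)` Fréchet–Urysohn, for every nontrivial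
convergent sequence `S` of `ξ(F)` and every `n`, the set
`D_S^n = {T ∈ S_c(ξ(F)) : |T ∩ S| ≥ n}` is open and dense in `S_c(ξ(F))`. -/
theorem stmt8 (F : Filter ℕ) (hfree : F ≤ Filter.cofinite) :
    letI : TopologicalSpace (Option ℕ) := xiTop F
    FrechetUrysohnSpace (Option ℕ) →
    ∀ (S : Sc (Option ℕ)) (n : ℕ),
      IsOpen {T : Sc (Option ℕ) | ∃ u : Finset (Option ℕ), ↑u ⊆ T.1 ∩ S.1 ∧ n ≤ u.card} ∧
      Dense {T : Sc (Option ℕ) | ∃ u : Finset (Option ℕ), ↑u ⊆ T.1 ∩ S.1 ∧ n ≤ u.card} := by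
  letI : TopologicalSpace (Option ℕ) := xiTop F
  intro _ S n
  constructor
  · -- openness
    rw [isOpen_iff_forall_mem_open]
    rintro T ⟨u, hu, hcard⟩
    -- the Vietoris-open set: hit each `some m` for `some m ∈ u`
    set W : Set (Set (Option ℕ)) :=
      ⋂ m ∈ Finset.eraseNone u, {R : Set (Option ℕ) | (R ∩ {some m}).Nonempty} with hWdef
    have hWopen : @IsOpen _ (vietoris (Option ℕ)) W :=
      @isOpen_biInter_finset _ _ (vietoris (Option ℕ)) _ _ fun m _ =>
        vietoris_hit (X := Option ℕ) (xi_isOpen_of_not_none F (by simp))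
    refine ⟨(fun R : Sc (Option ℕ) => R.1) ⁻¹' W, ?_, ?_, ?_⟩
    · -- contained in D
      rintro R hR
      refine ⟨u, ?_, hcard⟩
      intro x hx
      refine ⟨?_, (hu hx).2⟩
      match x with
      | none => exact (ncs_none F R.2).1
      | some m =>
        have : R.1 ∈ {R : Set (Option ℕ) | (R ∩ {some m}).Nonempty} := by
          have := Set.mem_iInter₂.1 hR m (Finset.mem_eraseNone.2 hx)
          exact this
        obtain ⟨y, hy1, hy2⟩ := this
        rwa [Set.mem_singleton_iff.1 hy2] at hy1
    · exact @IsOpen.preimage _ _ _ (vietoris (Option ℕ)) (fun S : Sc (Option ℕ) => S.1)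
        (@continuous_induced_dom (Sc (Option ℕ)) _ (fun S : Sc (Option ℕ) => S.1)
          (vietoris (Option ℕ))) W hWopen
    · -- T belongs
      refine Set.mem_iInter₂.2 fun m hm => ?_
      exact ⟨some m, (hu (Finset.mem_eraseNone.1 hm)).1, rfl⟩
  · -- density
    rw [dense_iff_inter_open]
    rintro V hV ⟨T, hTV⟩
    obtain ⟨W, hW, rfl⟩ :=
      (@isOpen_induced_iff (Sc (Option ℕ)) (Set (Option ℕ)) (vietoris (Option ℕ)) V
        (fun S : Sc (Option ℕ) => S.1)).1 hV
    obtain ⟨U, hUopen, hTU, hkey⟩ := vietoris_key hW T.1 hTV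
    have hT0 : none ∈ T.1 := (ncs_none F T.2).1
    have hU0 : none ∈ U := hTU hT0
    -- S ∩ U is infinite
    have hSU : (S.1 ∩ U).Infinite := by
      have h1 : (S.1 \ U).Finite := (ncs_none F S.2).2 U hUopen hU0
      have := S.2.1.diff h1
      rwa [Set.diff_diff_right_self] at this
    obtain ⟨u, huSU, hucard⟩ := hSU.exists_subset_card_eq n
    -- the new sequence
    set T' : Set (Option ℕ) := T.1 ∪ ↑u with hT'def
    have hT'ncs : @IsNCS _ (xiTop F) T' := by
      refine ncs_of F (T.2.1.mono Set.subset_union_left) (Or.inl hT0) ?_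
      intro V' hV' h0V'
      have : T' \ V' ⊆ (T.1 \ V') ∪ ↑u := by
        rintro x ⟨hx, hxV⟩
        rcases hx with hx | hx
        · exact Or.inl ⟨hx, hxV⟩
        · exact Or.inr hx
      exact (((ncs_none F T.2).2 V' hV' h0V').union u.finite_toSet).subset this
    refine ⟨⟨T', hT'ncs⟩, ?_, ⟨u, ?_, hucard.ge⟩⟩
    · -- membership in the open set
      show T' ∈ W
      refine hkey T' Set.subset_union_left ?_
      refine Set.union_subset hTU ?_
      exact fun x hx => (huSU hx).2
    · -- u ⊆ T' ∩ S
      intro x hx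
      exact ⟨Or.inr hx, (huSU hx).1⟩
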